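/- Let p ≥ 1 be an integer, a, b, τ > 0 with |1 − 1/τ²| < 1, s ∈ ℝ, and y ∈ ℝ^p; set Z = ‖y‖². Define the joint density on ℝ^p × (0,1): f(β, κ) = N_p(y; β, I) N_p(β; 0, (1/κ − 1) I) π_{a,b,τ,s}(κ). Then E(κ | y) := [∬ κ f(β,κ) dβ dκ] / [∬ f(β,κ) dβ dκ] = [(a + p/2)/(a + b + p/2)] · Φ₁(b, 1; a + b + p/2 + 1; s + Z/2, 1−1/τ²) / Φ₁(b, 1; a + b + p/2; s + Z/2, 1−1/τ²). -/

import Mathlib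

open MeasureTheory Set

/-- The unnormalized hypergeometric-beta kernel
`κ^{a−1} (1−κ)^{b−1} {1/τ² + (1 − 1/τ²)κ}^{−1} e^{−sκ}`. -/
noncomputable def hbKer (a b τ s κ : ℝ) : ℝ :=
  κ ^ (a - 1) * (1 - κ) ^ (b - 1) * (1 / τ ^ 2 + (1 - 1 / τ ^ 2) * κ)⁻¹ *
    Real.exp (-(s * κ))

/-- The normalizing constant `C(a,b,τ,s)`. -/
noncomputable def hbC (a b τ s : ℝ) : ℝ :=
  ∫ κ in Set.Ioo (0 : ℝ) 1, hbKer a b τ s κ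

/-- The hypergeometric-beta density `π_{a,b,τ,s}` on `(0,1)`. -/
noncomputable def hbPdf (a b τ s κ : ℝ) : ℝ :=
  (hbC a b τ s)⁻¹ * hbKer a b τ s κ

/-- The rising factorial `(q)_k = q (q+1) ⋯ (q+k−1)`. -/
noncomputable def risingFac (q : ℝ) (k : ℕ) : ℝ :=
  ∏ i ∈ Finset.range k, (q + (i : ℝ))

/-- The degenerate (Humbert) hypergeometric function of two variables
`Φ₁(α, β; γ; x, y) = Σ_{m,n≥0} [(α)_{m+n} (β)_n / ((γ)_{m+n} m! n!)] x^m y^n`. -/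
noncomputable def Phi1 (α β γ x y : ℝ) : ℝ :=
  ∑' p : ℕ × ℕ,
    risingFac α (p.1 + p.2) * risingFac β p.2 /
      (risingFac γ (p.1 + p.2) * (Nat.factorial p.1) * (Nat.factorial p.2)) *
      x ^ p.1 * y ^ p.2

/-- The Euler beta function `B(a,b) = Γ(a)Γ(b)/Γ(a+b)`. -/
noncomputable def betaFn (a b : ℝ) : ℝ :=
  Real.Gamma a * Real.Gamma b / Real.Gamma (a + b)

/-- The `p`-dimensional normal density with mean `μ` and covariance `c I`. -/
noncomputable def mvNormPdf (p : ℕ) (x μ : EuclideanSpace ℝ (Fin p)) (c : ℝ) : ℝ :=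
  (2 * Real.pi * c) ^ (-(p : ℝ) / 2) * Real.exp (-‖x - μ‖ ^ 2 / (2 * c))

/-- The joint density `f(β, κ) = N_p(y; β, I) N_p(β; 0, (1/κ − 1) I) π_{a,b,τ,s}(κ)`. -/
noncomputable def jointFp (p : ℕ) (a b τ s : ℝ) (y β : EuclideanSpace ℝ (Fin p))
    (κ : ℝ) : ℝ :=
  mvNormPdf p y β 1 * mvNormPdf p β 0 (1 / κ - 1) * hbPdf a b τ s κ

lemma risingFac_pos {q : ℝ} (hq : 0 < q) (k : ℕ) : 0 < risingFac q k := by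
  apply Finset.prod_pos; intro i _; positivity

lemma risingFac_one_eq (n : ℕ) : risingFac 1 n = (Nat.factorial n : ℝ) := by
  induction n with
  | zero => simp [risingFac]
  | succ n ih =>
      rw [risingFac, Finset.prod_range_succ, ← risingFac, ih]
      push_cast [Nat.factorial_succ]; ring

lemma Gamma_add_nat {q : ℝ} (hq : 0 < q) (k : ℕ) :
    Real.Gamma (q + k) = risingFac q k * Real.Gamma q := by
  induction k with
  | zero => simp [risingFac]
  | succ k ih =>
      have h1 : q + ((k : ℕ) + 1 : ℕ) = (q + k) + 1 := by push_cast; ring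
      rw [h1, Real.Gamma_add_one (by positivity), ih]
      simp only [risingFac, Finset.prod_range_succ]
      ring

lemma betaFn_pos {u v : ℝ} (hu : 0 < u) (hv : 0 < v) : 0 < betaFn u v := by
  unfold betaFn
  have h1 := Real.Gamma_pos_of_pos hu
  have h2 := Real.Gamma_pos_of_pos hv
  have h3 := Real.Gamma_pos_of_pos (by linarith : 0 < u + v)
  positivity

lemma integrableOn_betaKer {u v : ℝ} (hu : 0 < u) (hv : 0 < v) :
    IntegrableOn (fun x : ℝ => x ^ (u - 1) * (1 - x) ^ (v - 1)) (Ioo 0 1) := by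
  have hc : IntervalIntegrable
      (fun x : ℝ => (x : ℂ) ^ ((u : ℂ) - 1) * (1 - (x : ℂ)) ^ ((v : ℂ) - 1)) volume 0 1 :=
    Complex.betaIntegral_convergent (by simpa using hu) (by simpa using hv)
  have h2 : IntegrableOn
      (fun x : ℝ => (x : ℂ) ^ ((u : ℂ) - 1) * (1 - (x : ℂ)) ^ ((v : ℂ) - 1)) (Ioo 0 1) := by
    have := (intervalIntegrable_iff_integrableOn_Ioc_of_le zero_le_one).mp hc
    exact this.mono_set Ioo_subset_Ioc_self
  have h3 : IntegrableOn
      (fun x : ℝ => ((x ^ (u - 1) * (1 - x) ^ (v - 1) : ℝ) : ℂ)) (Ioo 0 1) := by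
    refine h2.congr_fun (fun x hx => ?_) measurableSet_Ioo
    rw [Complex.ofReal_mul, Complex.ofReal_cpow hx.1.le,
      Complex.ofReal_cpow (by linarith [hx.2] : (0:ℝ) ≤ 1 - x)]
    push_cast; ring
  have h4 := h3.re
  refine h4.congr (Filter.Eventually.of_forall fun x => ?_)
  simp

lemma setIntegral_betaKer {u v : ℝ} (hu : 0 < u) (hv : 0 < v) :
    ∫ x in Ioo (0:ℝ) 1, x ^ (u - 1) * (1 - x) ^ (v - 1) = betaFn u v := by
  have key := Complex.Gamma_mul_Gamma_eq_betaIntegral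
    (s := (u : ℂ)) (t := (v : ℂ)) (by simpa using hu) (by simpa using hv)
  have hI : Complex.betaIntegral u v
      = ((∫ x in Ioo (0:ℝ) 1, x ^ (u - 1) * (1 - x) ^ (v - 1) : ℝ) : ℂ) := by
    have e : EqOn (fun x : ℝ => (x:ℂ) ^ ((u:ℂ)-1) * (1-(x:ℂ)) ^ ((v:ℂ)-1))
        (fun x : ℝ => ((x ^ (u-1) * (1-x) ^ (v-1) : ℝ) : ℂ)) (Ioo 0 1) := by
      intro x hx
      simp only
      rw [Complex.ofReal_mul, Complex.ofReal_cpow hx.1.le,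
        Complex.ofReal_cpow (by linarith [hx.2] : (0:ℝ) ≤ 1 - x)]
      push_cast; ring
    rw [Complex.betaIntegral, intervalIntegral.integral_of_le zero_le_one,
      integral_Ioc_eq_integral_Ioo, setIntegral_congr_fun measurableSet_Ioo e]
    exact integral_ofReal
  rw [hI, ← Complex.ofReal_add, Complex.Gamma_ofReal, Complex.Gamma_ofReal,
    Complex.Gamma_ofReal, ← Complex.ofReal_mul, ← Complex.ofReal_mul,
    Complex.ofReal_inj] at key
  have hne : Real.Gamma (u + v) ≠ 0 := (Real.Gamma_pos_of_pos (by linarith)).ne'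
  unfold betaFn
  rw [eq_div_iff hne]
  linear_combination -key

noncomputable def hbF (A b x yv : ℝ) (mn : ℕ × ℕ) (κ : ℝ) : ℝ :=
  (Real.exp (-x) * (x ^ mn.1 / (Nat.factorial mn.1 : ℝ)) * yv ^ mn.2) *
    (κ ^ (A - 1) * (1 - κ) ^ (b + mn.1 + mn.2 - 1))

lemma hbKer_eq_tsum {A b τ x : ℝ} (hτ' : |1 - 1 / τ ^ 2| < 1) {κ : ℝ}
    (hκ : κ ∈ Ioo (0:ℝ) 1) :
    hbKer A b τ x κ = ∑' mn : ℕ × ℕ, hbF A b x (1 - 1 / τ ^ 2) mn κ := by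
  obtain ⟨hκ0, hκ1⟩ := hκ
  have h1κ : 0 < 1 - κ := by linarith
  set yv := 1 - 1 / τ ^ 2 with hyv
  have habs : |yv * (1 - κ)| < 1 := by
    rw [abs_mul, abs_of_pos h1κ]
    calc |yv| * (1 - κ) ≤ |yv| * 1 := by
          exact mul_le_mul_of_nonneg_left (by linarith) (abs_nonneg _)
      _ = |yv| := mul_one _
      _ < 1 := hτ'
  have hgeom : (1 / τ ^ 2 + (1 - 1 / τ ^ 2) * κ)⁻¹ = ∑' n : ℕ, (yv * (1 - κ)) ^ n := by
    have h : 1 / τ ^ 2 + (1 - 1 / τ ^ 2) * κ = 1 - yv * (1 - κ) := by rw [hyv]; ring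
    rw [h, ← tsum_geometric_of_abs_lt_one habs]
  have hexp : Real.exp (-(x * κ))
      = Real.exp (-x) * ∑' m : ℕ, (x * (1 - κ)) ^ m / (Nat.factorial m : ℝ) := by
    have h1 : Real.exp (x * (1 - κ)) = ∑' m : ℕ, (x * (1 - κ)) ^ m / (Nat.factorial m : ℝ) := by
      rw [Real.exp_eq_exp_ℝ, NormedSpace.exp_eq_tsum_div]
    rw [← h1, ← Real.exp_add]; ring_nf
  have hsum1 : Summable fun m : ℕ => ‖(x * (1 - κ)) ^ m / (Nat.factorial m : ℝ)‖ := by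
    simp only [norm_div, norm_pow, Real.norm_eq_abs, Nat.abs_cast]
    exact Real.summable_pow_div_factorial _
  have hsum2 : Summable fun n : ℕ => ‖(yv * (1 - κ)) ^ n‖ := by
    simp only [norm_pow, Real.norm_eq_abs]
    exact summable_geometric_of_abs_lt_one (by rwa [abs_abs])
  have hmul := tsum_mul_tsum_of_summable_norm hsum1 hsum2
  unfold hbKer
  rw [hgeom, hexp]
  have hre : κ ^ (A - 1) * (1 - κ) ^ (b - 1) * (∑' n : ℕ, (yv * (1 - κ)) ^ n) *
      (Real.exp (-x) * ∑' m : ℕ, (x * (1 - κ)) ^ m / (Nat.factorial m : ℝ))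
      = (Real.exp (-x) * (κ ^ (A - 1) * (1 - κ) ^ (b - 1))) *
        ((∑' m : ℕ, (x * (1 - κ)) ^ m / (Nat.factorial m : ℝ)) *
          (∑' n : ℕ, (yv * (1 - κ)) ^ n)) := by ring
  rw [hre, hmul, ← tsum_mul_left]
  refine tsum_congr fun mn => ?_
  unfold hbF
  have hpow : (1 - κ) ^ (b + mn.1 + mn.2 - 1)
      = (1 - κ) ^ (b - 1) * (1 - κ) ^ (mn.1 : ℕ) * (1 - κ) ^ (mn.2 : ℕ) := by
    rw [← Real.rpow_natCast (1 - κ) mn.1, ← Real.rpow_natCast (1 - κ) mn.2,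
      ← Real.rpow_add h1κ, ← Real.rpow_add h1κ]
    ring_nf
  rw [hpow, mul_pow, mul_pow]
  ring

lemma hbC_eq {A b τ x : ℝ} (hA : 0 < A) (hb : 0 < b) (hτ' : |1 - 1 / τ ^ 2| < 1) :
    hbC A b τ x = Real.exp (-x) * betaFn A b * Phi1 b 1 (A + b) x (1 - 1 / τ ^ 2) := by
  set yv := 1 - 1 / τ ^ 2 with hyv
  have habs : |yv| < 1 := hτ'
  have hbmn : ∀ mn : ℕ × ℕ, (0:ℝ) < b + mn.1 + mn.2 := fun mn => by positivity
  have hint : ∀ mn : ℕ × ℕ, IntegrableOn (hbF A b x yv mn) (Ioo (0:ℝ) 1) := by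
    intro mn
    exact (integrableOn_betaKer hA (hbmn mn)).const_mul _
  have hval : ∀ mn : ℕ × ℕ, (∫ κ in Ioo (0:ℝ) 1, hbF A b x yv mn κ)
      = (Real.exp (-x) * (x ^ mn.1 / (Nat.factorial mn.1 : ℝ)) * yv ^ mn.2) *
        betaFn A (b + mn.1 + mn.2) := by
    intro mn
    unfold hbF
    rw [MeasureTheory.integral_const_mul, setIntegral_betaKer hA (hbmn mn)]
  have hnorm : ∀ mn : ℕ × ℕ, (∫ κ in Ioo (0:ℝ) 1, ‖hbF A b x yv mn κ‖)
      = ‖Real.exp (-x) * (x ^ mn.1 / (Nat.factorial mn.1 : ℝ)) * yv ^ mn.2‖ *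
        betaFn A (b + mn.1 + mn.2) := by
    intro mn
    have : ∀ κ ∈ Ioo (0:ℝ) 1, ‖hbF A b x yv mn κ‖
        = ‖Real.exp (-x) * (x ^ mn.1 / (Nat.factorial mn.1 : ℝ)) * yv ^ mn.2‖ *
          (κ ^ (A - 1) * (1 - κ) ^ (b + mn.1 + mn.2 - 1)) := by
      intro κ hκ
      have h0 : (0:ℝ) < κ := hκ.1
      have h1 : (0:ℝ) < 1 - κ := by linarith [hκ.2]
      unfold hbF
      rw [norm_mul, Real.norm_eq_abs (κ ^ (A - 1) * (1 - κ) ^ (b + mn.1 + mn.2 - 1)),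
        abs_of_nonneg (by positivity)]
    rw [setIntegral_congr_fun measurableSet_Ioo this, MeasureTheory.integral_const_mul,
      setIntegral_betaKer hA (hbmn mn)]
  have hBle : ∀ mn : ℕ × ℕ, betaFn A (b + mn.1 + mn.2) ≤ betaFn A b := by
    intro mn
    rw [← setIntegral_betaKer hA hb, ← setIntegral_betaKer hA (hbmn mn)]
    refine setIntegral_mono_on (integrableOn_betaKer hA (hbmn mn))
      (integrableOn_betaKer hA hb) measurableSet_Ioo fun κ hκ => ?_
    have h0 : (0:ℝ) < κ := hκ.1
    have h1 : (0:ℝ) < 1 - κ := by linarith [hκ.2]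
    refine mul_le_mul_of_nonneg_left ?_ (by positivity)
    exact Real.rpow_le_rpow_of_exponent_ge h1 (by linarith [hκ.1])
      (by have h1 := Nat.cast_nonneg (α := ℝ) mn.1; have h2 := Nat.cast_nonneg (α := ℝ) mn.2; linarith)
  have hsummable : Summable fun mn : ℕ × ℕ => ∫ κ in Ioo (0:ℝ) 1, ‖hbF A b x yv mn κ‖ := by
    have h1 : Summable fun m : ℕ => ‖|x| ^ m / (Nat.factorial m : ℝ)‖ := by
      simp only [norm_div, norm_pow, Real.norm_eq_abs, Nat.abs_cast, abs_abs]
      exact Real.summable_pow_div_factorial _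
    have h2 : Summable fun n : ℕ => ‖|yv| ^ n‖ := by
      simp only [norm_pow, Real.norm_eq_abs, abs_abs]
      exact summable_geometric_of_abs_lt_one (by rwa [abs_abs])
    have hS : Summable fun mn : ℕ × ℕ =>
        (Real.exp (-x) * betaFn A b) * ((|x| ^ mn.1 / (Nat.factorial mn.1 : ℝ)) * |yv| ^ mn.2) :=
      (summable_mul_of_summable_norm h1 h2).mul_left _
    refine Summable.of_nonneg_of_le (fun mn => integral_nonneg fun κ => norm_nonneg _)
      (fun mn => ?_) hS
    rw [hnorm mn]
    have hc : ‖Real.exp (-x) * (x ^ mn.1 / (Nat.factorial mn.1 : ℝ)) * yv ^ mn.2‖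
        = Real.exp (-x) * (|x| ^ mn.1 / (Nat.factorial mn.1 : ℝ)) * |yv| ^ mn.2 := by
      simp [norm_mul, norm_div, norm_pow, Real.norm_eq_abs,
        abs_of_pos (Real.exp_pos _), Nat.abs_cast, abs_div]
    rw [hc]
    calc Real.exp (-x) * (|x| ^ mn.1 / (Nat.factorial mn.1 : ℝ)) * |yv| ^ mn.2 *
          betaFn A (b + mn.1 + mn.2)
        ≤ Real.exp (-x) * (|x| ^ mn.1 / (Nat.factorial mn.1 : ℝ)) * |yv| ^ mn.2 *
          betaFn A b := mul_le_mul_of_nonneg_left (hBle mn) (by positivity)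
      _ = (Real.exp (-x) * betaFn A b) *
          ((|x| ^ mn.1 / (Nat.factorial mn.1 : ℝ)) * |yv| ^ mn.2) := by ring
  have hrepr : hbC A b τ x = ∑' mn : ℕ × ℕ, ∫ κ in Ioo (0:ℝ) 1, hbF A b x yv mn κ := by
    unfold hbC
    rw [setIntegral_congr_fun measurableSet_Ioo fun κ hκ => hbKer_eq_tsum hτ' hκ]
    exact (integral_tsum_of_summable_integral_norm (fun mn => hint mn) hsummable).symm
  rw [hrepr, Phi1, ← tsum_mul_left]
  refine tsum_congr fun mn => ?_
  obtain ⟨m, n⟩ := mn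
  rw [hval (m, n)]
  simp only
  have hg1 : Real.Gamma (b + (m:ℝ) + n) = risingFac b (m + n) * Real.Gamma b := by
    rw [show b + (m:ℝ) + (n:ℝ) = b + ((m + n : ℕ) : ℝ) by push_cast; ring, Gamma_add_nat hb]
  have hg2 : Real.Gamma (A + (b + (m:ℝ) + n))
      = risingFac (A + b) (m + n) * Real.Gamma (A + b) := by
    rw [show A + (b + (m:ℝ) + n) = (A + b) + ((m + n : ℕ) : ℝ) by push_cast; ring,
      Gamma_add_nat (by positivity)]
  have hΓb : Real.Gamma b ≠ 0 := (Real.Gamma_pos_of_pos hb).ne'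
  have hΓAb : Real.Gamma (A + b) ≠ 0 := (Real.Gamma_pos_of_pos (by positivity)).ne'
  have hrf : risingFac (A + b) (m + n) ≠ 0 := (risingFac_pos (by positivity) _).ne'
  have hβ : betaFn A (b + (m:ℝ) + n)
      = betaFn A b * (risingFac b (m + n) / risingFac (A + b) (m + n)) := by
    unfold betaFn
    rw [hg1, hg2]
    field_simp
  rw [hβ, risingFac_one_eq]
  have hfm : (Nat.factorial m : ℝ) ≠ 0 := Nat.cast_ne_zero.mpr (Nat.factorial_ne_zero m)
  have hfn : (Nat.factorial n : ℝ) ≠ 0 := Nat.cast_ne_zero.mpr (Nat.factorial_ne_zero n)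
  field_simp

lemma hbKer_pos {A b τ x κ : ℝ} (hτ : 0 < τ) (hκ : κ ∈ Ioo (0:ℝ) 1) :
    0 < hbKer A b τ x κ := by
  have hκ0 := hκ.1
  have h1κ : 0 < 1 - κ := by linarith [hκ.2]
  have h2 : 0 < 1 / τ ^ 2 + (1 - 1 / τ ^ 2) * κ := by
    have h : 1 / τ ^ 2 + (1 - 1 / τ ^ 2) * κ = (1 - κ) / τ ^ 2 + κ := by ring
    rw [h]; positivity
  unfold hbKer
  positivity

lemma hbKer_integrableOn {A b τ x : ℝ} (hA : 0 < A) (hb : 0 < b) (hτ : 0 < τ)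
    (hτ' : |1 - 1 / τ ^ 2| < 1) :
    IntegrableOn (hbKer A b τ x) (Ioo (0:ℝ) 1) := by
  have hMpos : 0 < 1 - |1 - 1 / τ ^ 2| := by linarith
  set M := (1 - |1 - 1 / τ ^ 2|)⁻¹ * Real.exp |x| with hM
  apply Integrable.mono' ((integrableOn_betaKer hA hb).const_mul M)
  · apply Measurable.aestronglyMeasurable
    unfold hbKer
    fun_prop
  · rw [ae_restrict_iff' measurableSet_Ioo]
    refine ae_of_all _ fun κ hκ => ?_
    have hκ0 := hκ.1
    have h1κ : 0 < 1 - κ := by linarith [hκ.2]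
    rw [Real.norm_eq_abs, abs_of_pos (hbKer_pos hτ hκ)]
    unfold hbKer
    have hg : 1 - |1 - 1 / τ ^ 2| ≤ 1 / τ ^ 2 + (1 - 1 / τ ^ 2) * κ := by
      have h : 1 / τ ^ 2 + (1 - 1 / τ ^ 2) * κ = 1 - (1 - 1 / τ ^ 2) * (1 - κ) := by ring
      rw [h]
      have h2 : (1 - 1 / τ ^ 2) * (1 - κ) ≤ |1 - 1 / τ ^ 2| := by
        calc (1 - 1 / τ ^ 2) * (1 - κ) ≤ |(1 - 1 / τ ^ 2) * (1 - κ)| := le_abs_self _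
          _ = |1 - 1 / τ ^ 2| * |1 - κ| := abs_mul _ _
          _ ≤ |1 - 1 / τ ^ 2| * 1 := by
              exact mul_le_mul_of_nonneg_left
                (by rw [abs_of_pos h1κ]; linarith) (abs_nonneg _)
          _ = |1 - 1 / τ ^ 2| := mul_one _
      linarith
    have b1 : (1 / τ ^ 2 + (1 - 1 / τ ^ 2) * κ)⁻¹ ≤ (1 - |1 - 1 / τ ^ 2|)⁻¹ :=
      inv_anti₀ hMpos hg
    have b2 : Real.exp (-(x * κ)) ≤ Real.exp |x| := by
      apply Real.exp_le_exp.mpr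
      refine le_trans (neg_le_abs _) ?_
      rw [abs_mul]
      calc |x| * |κ| ≤ |x| * 1 := by
            exact mul_le_mul_of_nonneg_left
              (by rw [abs_of_pos hκ0]; linarith [hκ.2]) (abs_nonneg _)
        _ = |x| := mul_one _
    have hgpos : 0 < 1 / τ ^ 2 + (1 - 1 / τ ^ 2) * κ := by
      have h : 1 / τ ^ 2 + (1 - 1 / τ ^ 2) * κ = (1 - κ) / τ ^ 2 + κ := by ring
      rw [h]; positivity
    calc κ ^ (A - 1) * (1 - κ) ^ (b - 1) * (1 / τ ^ 2 + (1 - 1 / τ ^ 2) * κ)⁻¹ *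
          Real.exp (-(x * κ))
        = (κ ^ (A - 1) * (1 - κ) ^ (b - 1)) *
          ((1 / τ ^ 2 + (1 - 1 / τ ^ 2) * κ)⁻¹ * Real.exp (-(x * κ))) := by ring
      _ ≤ (κ ^ (A - 1) * (1 - κ) ^ (b - 1)) *
          ((1 - |1 - 1 / τ ^ 2|)⁻¹ * Real.exp |x|) := by
          refine mul_le_mul_of_nonneg_left ?_ (by positivity)
          exact mul_le_mul b1 b2 (Real.exp_pos _).le (by positivity)
      _ = M * (κ ^ (A - 1) * (1 - κ) ^ (b - 1)) := by rw [hM]; ring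

lemma hbC_pos {A b τ x : ℝ} (hA : 0 < A) (hb : 0 < b) (hτ : 0 < τ)
    (hτ' : |1 - 1 / τ ^ 2| < 1) :
    0 < hbC A b τ x := by
  unfold hbC
  rw [setIntegral_pos_iff_support_of_nonneg_ae]
  · refine lt_of_lt_of_le ?_ (measure_mono (subset_inter
      (fun κ hκ => (hbKer_pos hτ hκ).ne') (subset_refl _)))
    rw [Real.volume_Ioo]
    norm_num
  · refine (ae_restrict_iff' measurableSet_Ioo).mpr (ae_of_all _ fun κ hκ => ?_)
    exact (hbKer_pos hτ hκ).le
  · exact hbKer_integrableOn hA hb hτ hτ'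

lemma hbKer_shift {a b τ s : ℝ} {κ : ℝ} (hκ : κ ∈ Ioo (0:ℝ) 1) (c Z : ℝ) :
    κ ^ c * Real.exp (-(Z * κ)) * hbKer a b τ s κ = hbKer (a + c) b τ (s + Z) κ := by
  unfold hbKer
  have h : κ ^ c * κ ^ (a - 1) = κ ^ (a + c - 1) := by
    rw [← Real.rpow_add hκ.1]; ring_nf
  have he : Real.exp (-((s + Z) * κ)) = Real.exp (-(Z * κ)) * Real.exp (-(s * κ)) := by
    rw [← Real.exp_add]; ring_nf
  rw [he, ← h]; ring

lemma hbKer_succ {A b τ x : ℝ} {κ : ℝ} (hκ : κ ∈ Ioo (0:ℝ) 1) :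
    κ * hbKer A b τ x κ = hbKer (A + 1) b τ x κ := by
  unfold hbKer
  have h : κ ^ (A + 1 - 1) = κ ^ (1:ℝ) * κ ^ (A - 1) := by
    rw [← Real.rpow_add hκ.1]; ring_nf
  rw [h, Real.rpow_one]; ring

lemma gauss_integral {p : ℕ} {v : ℝ} (hv : 0 < v) (m : EuclideanSpace ℝ (Fin p)) :
    ∫ β : EuclideanSpace ℝ (Fin p), Real.exp (-‖β - m‖ ^ 2 / (2 * v))
      = (2 * Real.pi * v) ^ ((p : ℝ) / 2) := by
  have h1 : ∀ β : EuclideanSpace ℝ (Fin p), Real.exp (-‖β - m‖ ^ 2 / (2 * v))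
      = (fun z : EuclideanSpace ℝ (Fin p) => Real.exp (-(1 / (2 * v)) * ‖z‖ ^ 2)) (β - m) := by
    intro β
    simp only
    congr 1
    field_simp
  simp_rw [h1]
  rw [MeasureTheory.integral_sub_right_eq_self
    (fun z : EuclideanSpace ℝ (Fin p) => Real.exp (-(1 / (2 * v)) * ‖z‖ ^ 2)) m]
  have h2 := GaussianFourier.integral_rexp_neg_mul_sq_norm (V := EuclideanSpace ℝ (Fin p))
    (b := 1 / (2 * v)) (by positivity)
  simp_rw [neg_mul] at h2 ⊢
  rw [h2, finrank_euclideanSpace_fin]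
  congr 1
  field_simp

lemma normal_prod {p : ℕ} (y β : EuclideanSpace ℝ (Fin p)) {κ : ℝ}
    (hκ : κ ∈ Ioo (0:ℝ) 1) :
    mvNormPdf p y β 1 * mvNormPdf p β 0 (1 / κ - 1) =
      ((2 * Real.pi) ^ (-(p : ℝ) / 2) * (2 * Real.pi * ((1 - κ) / κ)) ^ (-(p : ℝ) / 2) *
        Real.exp (-(‖y‖ ^ 2 / 2 * κ))) *
      Real.exp (-‖β - (1 - κ) • y‖ ^ 2 / (2 * (1 - κ))) := by
  obtain ⟨hκ0, hκ1⟩ := hκ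
  have h1κ : 0 < 1 - κ := by linarith
  have hc : 1 / κ - 1 = (1 - κ) / κ := by field_simp
  unfold mvNormPdf
  rw [hc, sub_zero, mul_one]
  have e1 : ‖y - β‖ ^ 2 = ‖y‖ ^ 2 - 2 * (inner ℝ y β : ℝ) + ‖β‖ ^ 2 := norm_sub_sq_real y β
  have e2 : ‖β - (1 - κ) • y‖ ^ 2
      = ‖β‖ ^ 2 - 2 * ((1 - κ) * (inner ℝ y β : ℝ)) + (1 - κ) ^ 2 * ‖y‖ ^ 2 := by
    rw [norm_sub_sq_real, real_inner_smul_right, real_inner_comm β y, norm_smul,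
      Real.norm_eq_abs, abs_of_pos h1κ, mul_pow]
  have key : Real.exp (-‖y - β‖ ^ 2 / (2 * 1)) * Real.exp (-‖β‖ ^ 2 / (2 * ((1 - κ) / κ)))
      = Real.exp (-(‖y‖ ^ 2 / 2 * κ)) * Real.exp (-‖β - (1 - κ) • y‖ ^ 2 / (2 * (1 - κ))) := by
    rw [← Real.exp_add, ← Real.exp_add]
    congr 1
    rw [e1, e2]
    field_simp
    ring
  calc (2 * Real.pi) ^ (-(p : ℝ) / 2) * Real.exp (-‖y - β‖ ^ 2 / (2 * 1)) *
        ((2 * Real.pi * ((1 - κ) / κ)) ^ (-(p : ℝ) / 2) *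
          Real.exp (-‖β‖ ^ 2 / (2 * ((1 - κ) / κ))))
      = ((2 * Real.pi) ^ (-(p : ℝ) / 2) * (2 * Real.pi * ((1 - κ) / κ)) ^ (-(p : ℝ) / 2)) *
        (Real.exp (-‖y - β‖ ^ 2 / (2 * 1)) * Real.exp (-‖β‖ ^ 2 / (2 * ((1 - κ) / κ)))) := by
        ring
    _ = ((2 * Real.pi) ^ (-(p : ℝ) / 2) * (2 * Real.pi * ((1 - κ) / κ)) ^ (-(p : ℝ) / 2) *
        Real.exp (-(‖y‖ ^ 2 / 2 * κ))) *
        Real.exp (-‖β - (1 - κ) • y‖ ^ 2 / (2 * (1 - κ))) := by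
        rw [key]; ring

lemma integral_normal_prod {p : ℕ} (y : EuclideanSpace ℝ (Fin p)) {κ : ℝ}
    (hκ : κ ∈ Ioo (0:ℝ) 1) :
    (∫ β : EuclideanSpace ℝ (Fin p), mvNormPdf p y β 1 * mvNormPdf p β 0 (1 / κ - 1))
      = (2 * Real.pi) ^ (-(p : ℝ) / 2) * κ ^ ((p : ℝ) / 2) *
        Real.exp (-(‖y‖ ^ 2 / 2 * κ)) := by
  obtain ⟨hκ0, hκ1⟩ := hκ
  have h1κ : 0 < 1 - κ := by linarith
  rw [integral_congr_ae (ae_of_all _ fun β => normal_prod y β ⟨hκ0, hκ1⟩)]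
  rw [MeasureTheory.integral_const_mul, gauss_integral h1κ ((1 - κ) • y)]
  have h2π : (0:ℝ) < 2 * Real.pi := by positivity
  have hX : (0:ℝ) < 2 * Real.pi * (1 - κ) := by positivity
  have hdiv : 2 * Real.pi * ((1 - κ) / κ) = (2 * Real.pi * (1 - κ)) / κ := by ring
  rw [show -(p:ℝ)/2 = -((p:ℝ)/2) by ring]
  rw [hdiv, Real.div_rpow hX.le hκ0.le, Real.rpow_neg hX.le, Real.rpow_neg hκ0.le,
    Real.rpow_neg (by positivity : (0:ℝ) ≤ 2 * Real.pi)]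
  have hXz : (2 * Real.pi * (1 - κ)) ^ ((p : ℝ) / 2) ≠ 0 :=
    (Real.rpow_pos_of_pos hX _).ne'
  have hκz : (κ : ℝ) ^ ((p : ℝ) / 2) ≠ 0 := (Real.rpow_pos_of_pos hκ0 _).ne'
  field_simp

lemma integral_jointFp {p : ℕ} (a b τ s : ℝ) (y : EuclideanSpace ℝ (Fin p)) {κ : ℝ}
    (hκ : κ ∈ Ioo (0:ℝ) 1) :
    (∫ β : EuclideanSpace ℝ (Fin p), jointFp p a b τ s y β κ)
      = ((2 * Real.pi) ^ (-(p : ℝ) / 2) * (hbC a b τ s)⁻¹) *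
        hbKer (a + (p : ℝ) / 2) b τ (s + ‖y‖ ^ 2 / 2) κ := by
  unfold jointFp
  rw [MeasureTheory.integral_mul_const, integral_normal_prod y hκ]
  unfold hbPdf
  rw [← hbKer_shift hκ ((p : ℝ) / 2) (‖y‖ ^ 2 / 2)]
  ring

lemma integral_jointFp_num {p : ℕ} (a b τ s : ℝ) (y : EuclideanSpace ℝ (Fin p)) {κ : ℝ}
    (hκ : κ ∈ Ioo (0:ℝ) 1) :
    (∫ β : EuclideanSpace ℝ (Fin p), κ * jointFp p a b τ s y β κ)
      = ((2 * Real.pi) ^ (-(p : ℝ) / 2) * (hbC a b τ s)⁻¹) *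
        hbKer (a + (p : ℝ) / 2 + 1) b τ (s + ‖y‖ ^ 2 / 2) κ := by
  rw [MeasureTheory.integral_const_mul, integral_jointFp a b τ s y hκ, ← hbKer_succ hκ]
  ring


theorem hb_shrinkage_weight (p : ℕ) (hp : 1 ≤ p) (a b τ s : ℝ) (ha : 0 < a) (hb : 0 < b)
    (hτ : 0 < τ) (hτ' : |1 - 1 / τ ^ 2| < 1) (y : EuclideanSpace ℝ (Fin p)) :
    (∫ κ in Set.Ioo (0 : ℝ) 1, ∫ β : EuclideanSpace ℝ (Fin p), κ * jointFp p a b τ s y β κ) /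
        (∫ κ in Set.Ioo (0 : ℝ) 1, ∫ β : EuclideanSpace ℝ (Fin p), jointFp p a b τ s y β κ) =
      (a + p / 2) / (a + b + p / 2) *
        (Phi1 b 1 (a + b + p / 2 + 1) (s + ‖y‖ ^ 2 / 2) (1 - 1 / τ ^ 2) /
          Phi1 b 1 (a + b + p / 2) (s + ‖y‖ ^ 2 / 2) (1 - 1 / τ ^ 2)) := by
  have hA0 : (0:ℝ) < a + (p : ℝ) / 2 := by positivity
  have hA1 : (0:ℝ) < a + (p : ℝ) / 2 + 1 := by positivity
  have hC : 0 < hbC a b τ s := hbC_pos ha hb hτ hτ'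
  have hk : (0:ℝ) < (2 * Real.pi) ^ (-(p : ℝ) / 2) * (hbC a b τ s)⁻¹ := by positivity
  have hnum : (∫ κ in Set.Ioo (0 : ℝ) 1,
        ∫ β : EuclideanSpace ℝ (Fin p), κ * jointFp p a b τ s y β κ)
      = ((2 * Real.pi) ^ (-(p : ℝ) / 2) * (hbC a b τ s)⁻¹) *
        hbC (a + (p : ℝ) / 2 + 1) b τ (s + ‖y‖ ^ 2 / 2) := by
    rw [setIntegral_congr_fun measurableSet_Ioo
      (fun κ hκ => integral_jointFp_num a b τ s y hκ)]
    rw [MeasureTheory.integral_const_mul]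
    rfl
  have hden : (∫ κ in Set.Ioo (0 : ℝ) 1,
        ∫ β : EuclideanSpace ℝ (Fin p), jointFp p a b τ s y β κ)
      = ((2 * Real.pi) ^ (-(p : ℝ) / 2) * (hbC a b τ s)⁻¹) *
        hbC (a + (p : ℝ) / 2) b τ (s + ‖y‖ ^ 2 / 2) := by
    rw [setIntegral_congr_fun measurableSet_Ioo
      (fun κ hκ => integral_jointFp a b τ s y hκ)]
    rw [MeasureTheory.integral_const_mul]
    rfl
  rw [hnum, hden, mul_div_mul_left _ _ (ne_of_gt hk)]
  rw [hbC_eq hA1 hb hτ', hbC_eq hA0 hb hτ']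
  rw [show a + (p : ℝ) / 2 + 1 + b = a + b + (p : ℝ) / 2 + 1 from by ring,
    show a + (p : ℝ) / 2 + b = a + b + (p : ℝ) / 2 from by ring]
  have hB0 : 0 < betaFn (a + (p : ℝ) / 2) b := betaFn_pos hA0 hb
  have hPhi0 : 0 < Phi1 b 1 (a + b + (p : ℝ) / 2) (s + ‖y‖ ^ 2 / 2) (1 - 1 / τ ^ 2) := by
    have h := hbC_pos (x := s + ‖y‖ ^ 2 / 2) hA0 hb hτ hτ'
    rw [hbC_eq hA0 hb hτ',
      show a + (p : ℝ) / 2 + b = a + b + (p : ℝ) / 2 from by ring] at h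
    have hc2 : 0 < Real.exp (-(s + ‖y‖ ^ 2 / 2)) * betaFn (a + (p : ℝ) / 2) b := by positivity
    by_contra hneg
    push_neg at hneg
    nlinarith [h, hc2]
  have hBsucc : betaFn (a + (p : ℝ) / 2 + 1) b
      = (a + (p : ℝ) / 2) / (a + b + (p : ℝ) / 2) * betaFn (a + (p : ℝ) / 2) b := by
    unfold betaFn
    rw [Real.Gamma_add_one hA0.ne',
      show a + (p : ℝ) / 2 + 1 + b = (a + (p : ℝ) / 2 + b) + 1 from by ring,
      Real.Gamma_add_one (by positivity : a + (p : ℝ) / 2 + b ≠ 0)]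
    field_simp
    ring
  rw [hBsucc]
  have hΦ0 : Phi1 b 1 (a + b + (p : ℝ) / 2) (s + ‖y‖ ^ 2 / 2) (1 - 1 / τ ^ 2) ≠ 0 := hPhi0.ne'
  have hAb : (a + b + (p : ℝ) / 2) ≠ 0 := by positivity
  have he : Real.exp (-(s + ‖y‖ ^ 2 / 2)) ≠ 0 := (Real.exp_pos _).ne'
  have hD : Real.exp (-(s + ‖y‖ ^ 2 / 2)) * betaFn (a + (p : ℝ) / 2) b *
      Phi1 b 1 (a + b + (p : ℝ) / 2) (s + ‖y‖ ^ 2 / 2) (1 - 1 / τ ^ 2) ≠ 0 :=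
    mul_ne_zero (mul_ne_zero he hB0.ne') hΦ0
  have key : Real.exp (-(s + ‖y‖ ^ 2 / 2)) *
        ((a + (p : ℝ) / 2) / (a + b + (p : ℝ) / 2) * betaFn (a + (p : ℝ) / 2) b) *
        Phi1 b 1 (a + b + (p : ℝ) / 2 + 1) (s + ‖y‖ ^ 2 / 2) (1 - 1 / τ ^ 2)
      = ((a + (p : ℝ) / 2) / (a + b + (p : ℝ) / 2) *
          (Phi1 b 1 (a + b + (p : ℝ) / 2 + 1) (s + ‖y‖ ^ 2 / 2) (1 - 1 / τ ^ 2) /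
            Phi1 b 1 (a + b + (p : ℝ) / 2) (s + ‖y‖ ^ 2 / 2) (1 - 1 / τ ^ 2))) *
        (Real.exp (-(s + ‖y‖ ^ 2 / 2)) * betaFn (a + (p : ℝ) / 2) b *
          Phi1 b 1 (a + b + (p : ℝ) / 2) (s + ‖y‖ ^ 2 / 2) (1 - 1 / τ ^ 2)) := by
    rw [div_eq_mul_inv (Phi1 b 1 (a + b + (p : ℝ) / 2 + 1) (s + ‖y‖ ^ 2 / 2) (1 - 1 / τ ^ 2))
      (Phi1 b 1 (a + b + (p : ℝ) / 2) (s + ‖y‖ ^ 2 / 2) (1 - 1 / τ ^ 2))]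
    calc Real.exp (-(s + ‖y‖ ^ 2 / 2)) *
          ((a + (p : ℝ) / 2) / (a + b + (p : ℝ) / 2) * betaFn (a + (p : ℝ) / 2) b) *
          Phi1 b 1 (a + b + (p : ℝ) / 2 + 1) (s + ‖y‖ ^ 2 / 2) (1 - 1 / τ ^ 2)
        = Real.exp (-(s + ‖y‖ ^ 2 / 2)) *
          ((a + (p : ℝ) / 2) / (a + b + (p : ℝ) / 2) * betaFn (a + (p : ℝ) / 2) b) *
          Phi1 b 1 (a + b + (p : ℝ) / 2 + 1) (s + ‖y‖ ^ 2 / 2) (1 - 1 / τ ^ 2) *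
          (Phi1 b 1 (a + b + (p : ℝ) / 2) (s + ‖y‖ ^ 2 / 2) (1 - 1 / τ ^ 2) *
            (Phi1 b 1 (a + b + (p : ℝ) / 2) (s + ‖y‖ ^ 2 / 2) (1 - 1 / τ ^ 2))⁻¹) := by
          rw [mul_inv_cancel₀ hΦ0, mul_one]
      _ = (a + (p : ℝ) / 2) / (a + b + (p : ℝ) / 2) *
          (Phi1 b 1 (a + b + (p : ℝ) / 2 + 1) (s + ‖y‖ ^ 2 / 2) (1 - 1 / τ ^ 2) *
            (Phi1 b 1 (a + b + (p : ℝ) / 2) (s + ‖y‖ ^ 2 / 2) (1 - 1 / τ ^ 2))⁻¹) *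
          (Real.exp (-(s + ‖y‖ ^ 2 / 2)) * betaFn (a + (p : ℝ) / 2) b *
            Phi1 b 1 (a + b + (p : ℝ) / 2) (s + ‖y‖ ^ 2 / 2) (1 - 1 / τ ^ 2)) := by ring
  rw [key, mul_div_assoc, div_self hD, mul_one]
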